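/- Let a, b > 0 and v ∈ ℝ, and let h be the generalized inverse Gaussian GIG(v, a, b) density, h(u) = C · u^{v-1} exp(−(a u + b/u)/2) for u > 0, where C = (a/b)^{v/2} / (2 K_v(√(ab))) is the normalizing constant (K_v denoting the modified Bessel function of the second kind). Then h is faster than polynomial near the origin: for every c > 0, there exists η_c > 0 such that the function u ↦ h(u)/u^c is strictly increasing on (0, η_c). -/

import Mathlib

open MeasureTheory Set

/-- The generalized inverse Gaussian `GIG(v, a, b)` density
`h(u) = C u^{v-1} exp(-(au + b/u)/2)`, where `C > 0` is the normalizing constant (which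
equals `(a/b)^{v/2}/(2 K_v(√(ab)))`, `K_v` being the modified Bessel function of the second
kind), is faster than polynomial near the origin: for every `c > 0`, `u ↦ h(u)/u^c` is
strictly increasing on some interval `(0, η_c)`. -/
theorem gig_faster_than_polynomial (a b : ℝ) (ha : 0 < a) (hb : 0 < b) (v : ℝ)
    (C : ℝ) (hC : 0 < C)
    (hnorm : ∫ u in Ioi (0:ℝ),
      C * u ^ (v - 1) * Real.exp (-(a * u + b / u) / 2) = 1)
    (h : ℝ → ℝ)
    (hdef : ∀ u : ℝ, 0 < u →
      h u = C * u ^ (v - 1) * Real.exp (-(a * u + b / u) / 2)) :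
    (∃ ε > 0, ∀ u ∈ Ioo (0:ℝ) ε, 0 < h u) ∧
    ∀ c : ℝ, 0 < c → ∃ η > 0, StrictMonoOn (fun u => h u / u ^ c) (Ioo (0:ℝ) η) := by
  constructor
  · refine ⟨1, one_pos, fun u hu => ?_⟩
    rw [hdef u hu.1]
    have := Real.rpow_pos_of_pos hu.1 (v - 1)
    positivity
  · intro c hc
    set p := v - 1 - c with hp
    set M := |p| + a / 2 + 1 with hM
    have hM0 : 0 < M := by positivity
    set η := min 1 (b / (2 * M)) with hη
    have hη0 : 0 < η := lt_min one_pos (by positivity)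
    refine ⟨η, hη0, ?_⟩
    set F := fun u : ℝ => C * u ^ p * Real.exp (-(a * u + b / u) / 2) with hF
    have hFmono : StrictMonoOn F (Ioo (0:ℝ) η) := by
      apply strictMonoOn_of_deriv_pos (convex_Ioo _ _)
      · intro u hu
        apply ContinuousAt.continuousWithinAt
        have hune : u ≠ 0 := ne_of_gt hu.1
        have h1 : ContinuousAt (fun u : ℝ => u ^ p) u :=
          Real.continuousAt_rpow_const u p (Or.inl hune)
        have h2 : ContinuousAt (fun u : ℝ => Real.exp (-(a * u + b / u) / 2)) u := by
          apply Real.continuous_exp.continuousAt.comp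
          exact (((continuous_const.mul continuous_id).continuousAt.add
            (continuousAt_const.div continuousAt_id hune)).neg.div_const 2)
        exact (continuousAt_const.mul h1).mul h2
      · intro u hu
        rw [interior_Ioo] at hu
        obtain ⟨hu0, huη⟩ := hu
        have hune : u ≠ 0 := ne_of_gt hu0
        have hu1 : u < 1 := lt_of_lt_of_le huη (min_le_left _ _)
        have hu2 : u < b / (2 * M) := lt_of_lt_of_le huη (min_le_right _ _)
        have hpow : HasDerivAt (fun u : ℝ => u ^ p) (p * u ^ (p - 1)) u :=
          Real.hasDerivAt_rpow_const (Or.inl hune)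
        have hq : HasDerivAt (fun u : ℝ => -(a * u + b / u) / 2)
            (-(a - b / u ^ 2) / 2) u := by
          have h1 : HasDerivAt (fun u : ℝ => a * u) a u := by
            simpa using (hasDerivAt_id u).const_mul a
          have h2 : HasDerivAt (fun u : ℝ => b / u) (-(b / u ^ 2)) u := by
            have := (hasDerivAt_inv hune).const_mul b
            simp only [div_eq_mul_inv]
            exact this.congr_deriv (by ring)
          have := ((h1.add h2).neg).div_const 2
          exact this.congr_deriv (by ring)
          try ring
        have hD : HasDerivAt F
            (C * (p * u ^ (p - 1)) * Real.exp (-(a * u + b / u) / 2)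
              + C * u ^ p * (Real.exp (-(a * u + b / u) / 2) * (-(a - b / u ^ 2) / 2))) u :=
          (hpow.const_mul C).mul hq.exp
        rw [hD.deriv]
        have hup : u ^ p = u ^ (p - 1) * u := by
          rw [show p = (p - 1) + 1 by ring, Real.rpow_add_one hune]
          ring_nf
        have hbu : 2 * M < b / u := by
          rw [lt_div_iff₀ hu0]
          have := (lt_div_iff₀ (by positivity : (0:ℝ) < 2 * M)).mp hu2
          nlinarith
        have hS : 0 < p + (b / u - a * u) / 2 := by
          nlinarith [neg_abs_le p, mul_pos ha hu0]
        have heq : C * (p * u ^ (p - 1)) * Real.exp (-(a * u + b / u) / 2)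
              + C * u ^ p * (Real.exp (-(a * u + b / u) / 2) * (-(a - b / u ^ 2) / 2))
            = C * u ^ (p - 1) * Real.exp (-(a * u + b / u) / 2)
              * (p + (b / u - a * u) / 2) := by
          rw [hup]
          field_simp
          ring
        rw [heq]
        have hE := Real.exp_pos (-(a * u + b / u) / 2)
        have hup1 := Real.rpow_pos_of_pos hu0 (p - 1)
        positivity
    apply hFmono.congr
    intro u hu
    show C * u ^ p * Real.exp (-(a * u + b / u) / 2) = h u / u ^ c
    rw [hdef u hu.1, hp, Real.rpow_sub hu.1]
    ring
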